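/- Let G be an abelian subgroup of the group 𝕋_n^*(K) of invertible lower triangular matrices with constant diagonal (K = ℝ or ℂ), and let g = exp⁻¹(G) ∩ 𝕋_n(K). Then g is an additive subgroup of 𝕋_n(K), and consequently for every vector v ∈ K^n, g_v = {Bv : B ∈ g} is an additive subgroup of K^n. -/

import Mathlib

open NormedSpace

/-- `A` is lower triangular with all diagonal entries equal (the set `𝕋_n(K)`). -/
def LowerTriConstDiag {K : Type*} [Semiring K] {n : ℕ}
    (A : Matrix (Fin n) (Fin n) K) : Prop :=
  (∀ i j : Fin n, i < j → A i j = 0) ∧ ∀ i j : Fin n, A i i = A j j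

namespace ExpPreAux

variable {𝕂 : Type*} [RCLike 𝕂] {n : ℕ}

/-- `M` vanishes on the strip `i < j + k` (filtration degree `k`). -/
def Fdeg (k : ℕ) (M : Matrix (Fin n) (Fin n) 𝕂) : Prop :=
  ∀ i j : Fin n, (i : ℕ) < (j : ℕ) + k → M i j = 0

theorem Fdeg.mono {k l : ℕ} (h : k ≤ l) {M : Matrix (Fin n) (Fin n) 𝕂}
    (hM : Fdeg l M) : Fdeg k M := fun i j hij =>
  hM i j (lt_of_lt_of_le hij (by omega))

theorem Fdeg.zero (k : ℕ) : Fdeg k (0 : Matrix (Fin n) (Fin n) 𝕂) :=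
  fun _ _ _ => rfl

theorem Fdeg.add {k : ℕ} {M N : Matrix (Fin n) (Fin n) 𝕂}
    (hM : Fdeg k M) (hN : Fdeg k N) : Fdeg k (M + N) := fun i j hij => by
  simp [Matrix.add_apply, hM i j hij, hN i j hij]

theorem Fdeg.neg {k : ℕ} {M : Matrix (Fin n) (Fin n) 𝕂}
    (hM : Fdeg k M) : Fdeg k (-M) := fun i j hij => by
  simp [Matrix.neg_apply, hM i j hij]

theorem Fdeg.sub {k : ℕ} {M N : Matrix (Fin n) (Fin n) 𝕂}
    (hM : Fdeg k M) (hN : Fdeg k N) : Fdeg k (M - N) := by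
  rw [sub_eq_add_neg]; exact hM.add hN.neg

theorem Fdeg.smul {k : ℕ} (c : 𝕂) {M : Matrix (Fin n) (Fin n) 𝕂}
    (hM : Fdeg k M) : Fdeg k (c • M) := fun i j hij => by
  simp [Matrix.smul_apply, hM i j hij]

theorem Fdeg.sum {k : ℕ} {ι : Type*} (s : Finset ι) (f : ι → Matrix (Fin n) (Fin n) 𝕂)
    (hf : ∀ p ∈ s, Fdeg k (f p)) : Fdeg k (∑ p ∈ s, f p) := fun i j hij => by
  rw [Matrix.sum_apply]
  exact Finset.sum_eq_zero fun p hp => hf p hp i j hij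

theorem Fdeg.mul {a b : ℕ} {M N : Matrix (Fin n) (Fin n) 𝕂}
    (hM : Fdeg a M) (hN : Fdeg b N) : Fdeg (a + b) (M * N) := fun i j hij => by
  rw [Matrix.mul_apply]
  apply Finset.sum_eq_zero
  intro l _
  rcases lt_or_ge (i : ℕ) ((l : ℕ) + a) with h | h
  · rw [hM i l h, zero_mul]
  · rw [hN l j (by omega), mul_zero]

theorem Fdeg.eq_zero {M : Matrix (Fin n) (Fin n) 𝕂} (hM : Fdeg n M) : M = 0 := by
  ext i j
  exact hM i j (lt_of_lt_of_le i.isLt (by omega))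

theorem Fdeg.pow {N : Matrix (Fin n) (Fin n) 𝕂} (hN : Fdeg 1 N) :
    ∀ k : ℕ, 1 ≤ k → Fdeg k (N ^ k) := by
  intro k
  induction k with
  | zero => omega
  | succ k ih =>
    intro _
    rcases Nat.eq_zero_or_pos k with rfl | hk
    · simpa using hN
    · have := (ih hk).mul hN
      rw [← pow_succ] at this
      simpa using this

theorem Fdeg.pow_eq_zero {N : Matrix (Fin n) (Fin n) 𝕂} (hN : Fdeg 1 N) :
    N ^ (n + 2) = 0 :=
  Fdeg.eq_zero <| (Fdeg.pow hN (n + 2) (by omega)).mono (by omega)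

/-- exponential of a nilpotent matrix as a finite sum -/
theorem exp_eq_sum {m : ℕ} {N : Matrix (Fin n) (Fin n) 𝕂} (h : N ^ m = 0) :
    exp N = ∑ k ∈ Finset.range m, (((Nat.factorial k) : 𝕂))⁻¹ • N ^ k := by
  rw [NormedSpace.exp_eq_tsum (𝕂 := 𝕂)]
  refine tsum_eq_sum fun k hk => ?_
  rw [Finset.mem_range, not_lt] at hk
  rw [pow_eq_zero_of_le hk h, smul_zero]

theorem commute_of_exp_commute {N₁ N₂ : Matrix (Fin n) (Fin n) 𝕂}
    (h₁ : Fdeg 1 N₁) (h₂ : Fdeg 1 N₂)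
    (hcomm : exp N₁ * exp N₂ = exp N₂ * exp N₁) :
    N₁ * N₂ = N₂ * N₁ := by
  set m := n + 2 with hm
  set C : Matrix (Fin n) (Fin n) 𝕂 := N₁ * N₂ - N₂ * N₁ with hC
  -- commutator estimates
  have lemA1 : ∀ k : ℕ, Fdeg k C → ∀ j : ℕ,
      Fdeg (k + j) (N₁ * N₂ ^ (j + 1) - N₂ ^ (j + 1) * N₁) := by
    intro k hk j
    induction j with
    | zero => simpa using hk
    | succ j ih =>
      have key : N₁ * N₂ ^ (j + 2) - N₂ ^ (j + 2) * N₁ =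
          (N₁ * N₂ ^ (j + 1) - N₂ ^ (j + 1) * N₁) * N₂ + N₂ ^ (j + 1) * C := by
        rw [hC, pow_succ N₂ (j + 1)]; noncomm_ring
      rw [key]
      have t1 : Fdeg (k + j + 1) ((N₁ * N₂ ^ (j + 1) - N₂ ^ (j + 1) * N₁) * N₂) :=
        ih.mul h₂
      have t2 : Fdeg (j + 1 + k) (N₂ ^ (j + 1) * C) :=
        (Fdeg.pow h₂ (j + 1) (by omega)).mul hk
      exact (t1.mono (by omega)).add ((t2.mono (by omega)) : Fdeg (k + (j+1)) _)
  have lemA2 : ∀ k : ℕ, Fdeg k C → ∀ i j : ℕ,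
      Fdeg (k + i + j) (N₁ ^ (i + 1) * N₂ ^ (j + 1) - N₂ ^ (j + 1) * N₁ ^ (i + 1)) := by
    intro k hk i
    induction i with
    | zero =>
      intro j
      simpa using lemA1 k hk j
    | succ i ih =>
      intro j
      have key : N₁ ^ (i + 2) * N₂ ^ (j + 1) - N₂ ^ (j + 1) * N₁ ^ (i + 2) =
          N₁ * (N₁ ^ (i + 1) * N₂ ^ (j + 1) - N₂ ^ (j + 1) * N₁ ^ (i + 1)) +
          (N₁ * N₂ ^ (j + 1) - N₂ ^ (j + 1) * N₁) * N₁ ^ (i + 1) := by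
        rw [pow_succ' N₁ (i + 1)]; noncomm_ring
      rw [key]
      have t1 := h₁.mul (ih j)
      have t2 := (lemA1 k hk j).mul (Fdeg.pow h₁ (i + 1) (by omega))
      exact (t1.mono (by omega)).add (t2.mono (by omega))
  -- the exponentials as finite sums
  have e₁ : exp N₁ = ∑ k ∈ Finset.range m, (((Nat.factorial k) : 𝕂))⁻¹ • N₁ ^ k :=
    exp_eq_sum (Fdeg.pow_eq_zero h₁)
  have e₂ : exp N₂ = ∑ k ∈ Finset.range m, (((Nat.factorial k) : 𝕂))⁻¹ • N₂ ^ k :=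
    exp_eq_sum (Fdeg.pow_eq_zero h₂)
  set s : Finset (ℕ × ℕ) := Finset.range m ×ˢ Finset.range m with hs
  set f : ℕ × ℕ → Matrix (Fin n) (Fin n) 𝕂 := fun p =>
    ((((Nat.factorial p.1) : 𝕂))⁻¹ * (((Nat.factorial p.2) : 𝕂))⁻¹) • (N₁ ^ p.1 * N₂ ^ p.2 - N₂ ^ p.2 * N₁ ^ p.1) with hf
  have hsum : ∑ p ∈ s, f p = 0 := by
    have expand1 : ∀ (A B : Matrix (Fin n) (Fin n) 𝕂),
        (∑ k ∈ Finset.range m, (((Nat.factorial k) : 𝕂))⁻¹ • A ^ k) *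
          (∑ k ∈ Finset.range m, (((Nat.factorial k) : 𝕂))⁻¹ • B ^ k) =
        ∑ p ∈ s, ((((Nat.factorial p.1) : 𝕂))⁻¹ * (((Nat.factorial p.2) : 𝕂))⁻¹) •
          (A ^ p.1 * B ^ p.2) := by
      intro A B
      rw [Finset.sum_mul_sum, hs, Finset.sum_product]
      refine Finset.sum_congr rfl fun i _ => Finset.sum_congr rfl fun j _ => ?_
      rw [smul_mul_smul_comm]
    have expand2 : ∀ (A B : Matrix (Fin n) (Fin n) 𝕂),
        (∑ k ∈ Finset.range m, (((Nat.factorial k) : 𝕂))⁻¹ • B ^ k) *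
          (∑ k ∈ Finset.range m, (((Nat.factorial k) : 𝕂))⁻¹ • A ^ k) =
        ∑ p ∈ s, ((((Nat.factorial p.2) : 𝕂))⁻¹ * (((Nat.factorial p.1) : 𝕂))⁻¹) •
          (B ^ p.2 * A ^ p.1) := by
      intro A B
      rw [Finset.sum_mul_sum, hs, Finset.sum_product_right]
      refine Finset.sum_congr rfl fun i _ => Finset.sum_congr rfl fun j _ => ?_
      rw [smul_mul_smul_comm]
    have step : ∑ p ∈ s, f p =
        (∑ p ∈ s, ((((Nat.factorial p.1) : 𝕂))⁻¹ * (((Nat.factorial p.2) : 𝕂))⁻¹) •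
          (N₁ ^ p.1 * N₂ ^ p.2)) -
        (∑ p ∈ s, ((((Nat.factorial p.2) : 𝕂))⁻¹ * (((Nat.factorial p.1) : 𝕂))⁻¹) •
          (N₂ ^ p.2 * N₁ ^ p.1)) := by
      rw [← Finset.sum_sub_distrib]
      refine Finset.sum_congr rfl fun p _ => ?_
      simp only [hf, smul_sub]
      congr 1
      rw [mul_comm]
    rw [step, ← expand1 N₁ N₂, ← expand2 N₁ N₂, ← e₁, ← e₂, hcomm, sub_self]
  have h11 : (1, 1) ∈ s := by
    rw [hs]
    exact Finset.mem_product.mpr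
      ⟨Finset.mem_range.mpr (by omega), Finset.mem_range.mpr (by omega)⟩
  have hf11 : f (1, 1) = C := by
    simp [hf, hC]
  -- induction on the filtration degree
  have main : ∀ k : ℕ, Fdeg k C := by
    intro k
    induction k with
    | zero =>
      exact ((h₁.mul h₂).sub (h₂.mul h₁)).mono (by omega)
    | succ k ih =>
      have hsplit : f (1, 1) + ∑ p ∈ s.erase (1, 1), f p = ∑ p ∈ s, f p :=
        Finset.add_sum_erase s f h11
      have hCeq : C = -∑ p ∈ s.erase (1, 1), f p := by
        rw [← hf11]
        exact eq_neg_of_add_eq_zero_left (hsplit.trans hsum)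
      rw [hCeq]
      refine Fdeg.neg (Fdeg.sum _ _ fun p hp => ?_)
      have hpne := (Finset.mem_erase.mp hp).1
      refine Fdeg.smul _ ?_
      rcases p with ⟨i, j⟩
      match i, j with
      | 0, j =>
        simp only [pow_zero, one_mul, mul_one, sub_self]
        exact Fdeg.zero _
      | i + 1, 0 =>
        simp only [pow_zero, one_mul, mul_one, sub_self]
        exact Fdeg.zero _
      | i + 1, j + 1 =>
        have hij : 1 ≤ i + j := by
          rcases Nat.eq_zero_or_pos (i + j) with h | h
          · exfalso; apply hpne
            have hi : i = 0 := by omega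
            have hj : j = 0 := by omega
            rw [hi, hj]
          · exact h
        exact (lemA2 k ih i j).mono (by omega)
  have := (main n).eq_zero
  rw [hC] at this
  exact sub_eq_zero.mp this

/-- decomposition constant diagonal -/
noncomputable def diagConst (B : Matrix (Fin n) (Fin n) 𝕂) : 𝕂 :=
  if h : 0 < n then B ⟨0, h⟩ ⟨0, h⟩ else 0

theorem fdeg_one_sub_diag {B : Matrix (Fin n) (Fin n) 𝕂} (hB : LowerTriConstDiag B) :
    Fdeg 1 (B - diagConst B • 1) := by
  intro i j hij
  have hn : 0 < n := i.pos
  rcases lt_or_eq_of_le (Nat.lt_succ_iff.mp hij) with h | h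
  · have hij' : i < j := h
    rw [Matrix.sub_apply, hB.1 i j hij', Matrix.smul_apply,
      Matrix.one_apply_ne (Fin.ne_of_lt hij'), smul_zero, sub_zero]
  · have hij' : i = j := Fin.ext h
    subst hij'
    rw [Matrix.sub_apply, Matrix.smul_apply, Matrix.one_apply_eq, smul_eq_mul, mul_one]
    simp only [diagConst]
    rw [dif_pos hn, hB.2 i ⟨0, hn⟩, sub_self]

theorem exp_decomp (B : Matrix (Fin n) (Fin n) 𝕂) :
    exp B = exp (diagConst B) • exp (B - diagConst B • 1) := by
  have hd : B = diagConst B • (1 : Matrix (Fin n) (Fin n) 𝕂) + (B - diagConst B • 1) := by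
    abel
  have hcomm : Commute (diagConst B • (1 : Matrix (Fin n) (Fin n) 𝕂))
      (B - diagConst B • 1) := ((Commute.one_left _).smul_left _)
  calc exp B = exp (diagConst B • (1 : Matrix (Fin n) (Fin n) 𝕂) + (B - diagConst B • 1)) :=
        by rw [← hd]
    _ = exp (diagConst B • (1 : Matrix (Fin n) (Fin n) 𝕂)) * exp (B - diagConst B • 1) :=
        Matrix.exp_add_of_commute _ _ hcomm
    _ = exp (diagConst B) • exp (B - diagConst B • 1) := by
        letI : SeminormedRing (Matrix (Fin n) (Fin n) 𝕂) := Matrix.linftyOpSemiNormedRing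
        letI : NormedRing (Matrix (Fin n) (Fin n) 𝕂) := Matrix.linftyOpNormedRing
        letI : NormedAlgebra 𝕂 (Matrix (Fin n) (Fin n) 𝕂) := Matrix.linftyOpNormedAlgebra
        rw [← Algebra.algebraMap_eq_smul_one, Algebra.smul_def]
        congr 1
        exact (NormedSpace.algebraMap_exp_comm _).symm

theorem scalar_exp_ne_zero (c : 𝕂) : exp c ≠ 0 := by
  intro h
  have : exp c * exp (-c) = 1 := by
    rw [← NormedSpace.exp_add_of_commute (Commute.all _ _), add_neg_cancel,
      NormedSpace.exp_zero]
  rw [h, zero_mul] at this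
  exact zero_ne_one this

end ExpPreAux

open ExpPreAux in
/-- Lemma 3.9: if `G` is an abelian subgroup of `𝕋_n^*(𝕂)` (𝕂 = ℝ or ℂ), then
`g = exp⁻¹(G) ∩ 𝕋_n(𝕂)` is an additive subgroup of `𝕋_n(𝕂)`; in particular, for every
`v ∈ 𝕂^n` the set `g_v = {B v : B ∈ g}` is an additive subgroup of `𝕂^n`. -/
theorem exp_preimage_addSubgroup
    {𝕂 : Type*} [RCLike 𝕂] (n : ℕ)
    (G : Subgroup (Matrix (Fin n) (Fin n) 𝕂)ˣ)
    (hT : ∀ A ∈ G, LowerTriConstDiag ((A : (Matrix (Fin n) (Fin n) 𝕂)ˣ) :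
      Matrix (Fin n) (Fin n) 𝕂))
    (hab : ∀ A ∈ G, ∀ B ∈ G, A * B = B * A) :
    (∃ H : AddSubgroup (Matrix (Fin n) (Fin n) 𝕂),
      (H : Set (Matrix (Fin n) (Fin n) 𝕂)) =
        {B | LowerTriConstDiag B ∧ ∃ A ∈ G, exp B =
          ((A : (Matrix (Fin n) (Fin n) 𝕂)ˣ) : Matrix (Fin n) (Fin n) 𝕂)}) ∧
    ∀ v : Fin n → 𝕂, ∃ Hv : AddSubgroup (Fin n → 𝕂),
      (Hv : Set (Fin n → 𝕂)) =
        {x | ∃ B : Matrix (Fin n) (Fin n) 𝕂,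
          (LowerTriConstDiag B ∧ ∃ A ∈ G, exp B =
            ((A : (Matrix (Fin n) (Fin n) 𝕂)ˣ) : Matrix (Fin n) (Fin n) 𝕂)) ∧
          x = B.mulVec v} := by
  set g : Set (Matrix (Fin n) (Fin n) 𝕂) :=
    {B | LowerTriConstDiag B ∧ ∃ A ∈ G, exp B =
      ((A : (Matrix (Fin n) (Fin n) 𝕂)ˣ) : Matrix (Fin n) (Fin n) 𝕂)} with hg
  -- commuting of elements of g
  have hBcomm : ∀ B₁ ∈ g, ∀ B₂ ∈ g, Commute B₁ B₂ := by
    rintro B₁ ⟨hT₁, A₁, hA₁, hE₁⟩ B₂ ⟨hT₂, A₂, hA₂, hE₂⟩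
    set N₁ := B₁ - diagConst B₁ • 1 with hN₁
    set N₂ := B₂ - diagConst B₂ • 1 with hN₂
    have hd₁ := fdeg_one_sub_diag hT₁
    have hd₂ := fdeg_one_sub_diag hT₂
    have hec : exp B₁ * exp B₂ = exp B₂ * exp B₁ := by
      rw [hE₁, hE₂, ← Units.val_mul, ← Units.val_mul, hab A₁ hA₁ A₂ hA₂]
    rw [exp_decomp B₁, exp_decomp B₂] at hec
    rw [smul_mul_assoc, smul_mul_assoc, mul_smul_comm, mul_smul_comm,
      smul_smul, smul_smul, mul_comm (exp (diagConst B₂))] at hec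
    have hscal : (exp (diagConst B₁) * exp (diagConst B₂) : 𝕂) ≠ 0 :=
      mul_ne_zero (scalar_exp_ne_zero _) (scalar_exp_ne_zero _)
    have hSS : exp N₁ * exp N₂ = exp N₂ * exp N₁ :=
      smul_right_injective _ hscal hec
    have hNN := commute_of_exp_commute hd₁ hd₂ hSS
    have e₁ : B₁ = diagConst B₁ • 1 + N₁ := by rw [hN₁]; abel
    have e₂ : B₂ = diagConst B₂ • 1 + N₂ := by rw [hN₂]; abel
    have hNN' : Commute N₁ N₂ := hNN
    have hD : ∀ (c : 𝕂) (X : Matrix (Fin n) (Fin n) 𝕂),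
        Commute (c • (1 : Matrix (Fin n) (Fin n) 𝕂)) X :=
      fun c X => (Commute.one_left X).smul_left c
    show Commute B₁ B₂
    rw [e₁, e₂]
    exact ((hD _ _).symm).add_right ((hD _ N₂).add_left hNN') |>.symm.symm
  have hzero : (0 : Matrix (Fin n) (Fin n) 𝕂) ∈ g := by
    refine ⟨⟨fun i j _ => rfl, fun i j => rfl⟩, 1, one_mem G, ?_⟩
    rw [NormedSpace.exp_zero, Units.val_one]
  have hadd : ∀ B₁ ∈ g, ∀ B₂ ∈ g, B₁ + B₂ ∈ g := by
    intro B₁ h₁ B₂ h₂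
    have hc := hBcomm B₁ h₁ B₂ h₂
    obtain ⟨hT₁, A₁, hA₁, hE₁⟩ := h₁
    obtain ⟨hT₂, A₂, hA₂, hE₂⟩ := h₂
    refine ⟨⟨fun i j hij => by rw [Matrix.add_apply, hT₁.1 i j hij, hT₂.1 i j hij, add_zero],
      fun i j => by rw [Matrix.add_apply, Matrix.add_apply, hT₁.2 i j, hT₂.2 i j]⟩,
      A₁ * A₂, mul_mem hA₁ hA₂, ?_⟩
    rw [Matrix.exp_add_of_commute _ _ hc, hE₁, hE₂, Units.val_mul]
  have hneg : ∀ B ∈ g, -B ∈ g := by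
    rintro B ⟨hTB, A, hA, hE⟩
    refine ⟨⟨fun i j hij => by rw [Matrix.neg_apply, hTB.1 i j hij, neg_zero],
      fun i j => by rw [Matrix.neg_apply, Matrix.neg_apply, hTB.2 i j]⟩,
      A⁻¹, inv_mem hA, ?_⟩
    have h1 : exp (-B) * exp B = 1 := by
      rw [← Matrix.exp_add_of_commute _ _ ((Commute.refl B).neg_left), neg_add_cancel,
        NormedSpace.exp_zero]
    have h2 : exp (-B) * (A : Matrix (Fin n) (Fin n) 𝕂) = 1 := by rw [← hE]; exact h1
    calc exp (-B) = exp (-B) * ((A : Matrix (Fin n) (Fin n) 𝕂) *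
          ((A⁻¹ : (Matrix (Fin n) (Fin n) 𝕂)ˣ) : Matrix (Fin n) (Fin n) 𝕂)) := by
          rw [← Units.val_mul, mul_inv_cancel, Units.val_one, mul_one]
      _ = ((A⁻¹ : (Matrix (Fin n) (Fin n) 𝕂)ˣ) : Matrix (Fin n) (Fin n) 𝕂) := by
          rw [← mul_assoc, h2, one_mul]
  set H : AddSubgroup (Matrix (Fin n) (Fin n) 𝕂) :=
    { carrier := g
      add_mem' := fun {a b} ha hb => hadd a ha b hb
      zero_mem' := hzero
      neg_mem' := fun {a} ha => hneg a ha } with hH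
  refine ⟨⟨H, rfl⟩, fun v => ?_⟩
  set φ : Matrix (Fin n) (Fin n) 𝕂 →+ (Fin n → 𝕂) :=
    { toFun := fun B => B.mulVec v
      map_zero' := Matrix.zero_mulVec v
      map_add' := fun a b => Matrix.add_mulVec a b v } with hφ
  refine ⟨H.map φ, ?_⟩
  ext x
  simp only [AddSubgroup.coe_map, Set.mem_image, Set.mem_setOf_eq]
  constructor
  · rintro ⟨B, hB, rfl⟩
    exact ⟨B, hB, rfl⟩
  · rintro ⟨B, hB, rfl⟩
    exact ⟨B, hB, rfl⟩
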